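/- Let l : ℝ^{n-1} → ℝ be L-Lipschitz with l(0) = 0 and l ≥ 0, let δ > 0, p > 1, τ ≥ 1. Then ∫_{|y'|<δ} ∫_{l(y')}^{δ} e^{-pτ y_n} dy_n dy' ≥ (pτ)^{-1}·(∫_{|y'|<δ} e^{-pτL|y'|} dy' − C_n δ^{n-1} e^{-pδτ}), where C_n δ^{n-1} is the measure of the ball {|y'|<δ} in ℝ^{n-1} divided appropriately; in particular the left-hand side is bounded below by c·τ^{-n} for some c > 0 and all sufficiently large τ. -/

import Mathlib

open Real MeasureTheory

lemma exp_int_formula {c : ℝ} (hc : 0 < c) (a b : ℝ) :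
    ∫ z in a..b, Real.exp (-(c * z)) = (Real.exp (-(c*a)) - Real.exp (-(c*b))) / c := by
  have hderiv : ∀ z ∈ Set.uIcc a b,
      HasDerivAt (fun t => -(Real.exp (-(c * t)) / c)) (Real.exp (-(c * z))) z := by
    intro z _
    have h1 : HasDerivAt (fun t : ℝ => -(c * t)) (-c) z := by
      have h := ((hasDerivAt_id z).const_mul c).neg
      rw [mul_one] at h
      exact h
    have h2 := (Real.hasDerivAt_exp (-(c*z))).comp z h1
    have h3 := (h2.div_const c).neg
    have h4 : HasDerivAt (fun t => -(Real.exp (-(c * t)) / c)) (-(Real.exp (-(c * z)) * -c / c)) z := h3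
    convert h4 using 1
    rw [mul_neg, neg_div, neg_neg, mul_div_assoc, div_self hc.ne', mul_one]
  rw [intervalIntegral.integral_eq_sub_of_hasDerivAt hderiv
    ((Continuous.intervalIntegrable (by continuity) a b))]
  ring

lemma cont_intOn_ball {m : ℕ} {f : EuclideanSpace ℝ (Fin m) → ℝ} (hf : Continuous f) (r : ℝ) :
    IntegrableOn f (Metric.ball (0 : EuclideanSpace ℝ (Fin m)) r) volume :=
  (hf.continuousOn.integrableOn_compact (isCompact_closedBall _ _)).mono_set
    Metric.ball_subset_closedBall

theorem graph_region_exponential_lower (n : ℕ) (hn : 2 ≤ n)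
    (l : EuclideanSpace ℝ (Fin (n - 1)) → ℝ) (L δ p : ℝ)
    (hL : 0 < L) (hδ : 0 < δ) (hp : 1 < p)
    (hlip : ∀ y z : EuclideanSpace ℝ (Fin (n - 1)), |l y - l z| ≤ L * ‖y - z‖)
    (hl0 : l 0 = 0) (hlnn : ∀ y, 0 ≤ l y)
    (hlδ : ∀ y : EuclideanSpace ℝ (Fin (n - 1)), ‖y‖ < δ → l y < δ) :
    (∀ τ : ℝ, 1 ≤ τ →
      (p * τ)⁻¹ *
          ((∫ y in Metric.ball (0 : EuclideanSpace ℝ (Fin (n - 1))) δ,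
              Real.exp (-(p * τ * L * ‖y‖))) -
            (volume (Metric.ball (0 : EuclideanSpace ℝ (Fin (n - 1))) δ)).toReal *
              Real.exp (-(p * δ * τ))) ≤
        ∫ y in Metric.ball (0 : EuclideanSpace ℝ (Fin (n - 1))) δ,
          ∫ z in (l y)..δ, Real.exp (-(p * τ * z))) ∧
    (∃ c : ℝ, 0 < c ∧ ∃ τ₁ : ℝ, 1 ≤ τ₁ ∧ ∀ τ : ℝ, τ₁ ≤ τ →
      c * τ ^ (-(n : ℝ)) ≤
        ∫ y in Metric.ball (0 : EuclideanSpace ℝ (Fin (n - 1))) δ,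
          ∫ z in (l y)..δ, Real.exp (-(p * τ * z))) := by
  have hp0 : (0:ℝ) < p := lt_trans one_pos hp
  have hlc : Continuous l := by
    have : LipschitzWith (Real.toNNReal L) l := by
      apply LipschitzWith.of_dist_le_mul
      intro x y
      rw [Real.dist_eq, dist_eq_norm, Real.coe_toNNReal _ hL.le]
      exact hlip x y
    exact this.continuous
  have hly : ∀ y, l y ≤ L * ‖y‖ := by
    intro y
    have := hlip y 0
    rw [hl0, sub_zero, sub_zero, abs_of_nonneg (hlnn y)] at this
    exact this
  have part1 : ∀ τ : ℝ, 1 ≤ τ →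
      (p * τ)⁻¹ *
          ((∫ y in Metric.ball (0 : EuclideanSpace ℝ (Fin (n - 1))) δ,
              Real.exp (-(p * τ * L * ‖y‖))) -
            (volume (Metric.ball (0 : EuclideanSpace ℝ (Fin (n - 1))) δ)).toReal *
              Real.exp (-(p * δ * τ))) ≤
        ∫ y in Metric.ball (0 : EuclideanSpace ℝ (Fin (n - 1))) δ,
          ∫ z in (l y)..δ, Real.exp (-(p * τ * z)) := by
    intro τ hτ
    have hτ0 : (0:ℝ) < τ := lt_of_lt_of_le one_pos hτ
    have hq : 0 < p * τ := mul_pos hp0 hτ0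
    have hinner : ∀ a : ℝ, ∫ z in a..δ, Real.exp (-(p * τ * z)) =
        (Real.exp (-(p * τ * a)) - Real.exp (-(p * τ * δ))) / (p * τ) :=
      fun a => exp_int_formula hq a δ
    simp only [hinner]
    have hpd : p * δ * τ = p * τ * δ := by ring
    rw [hpd, integral_div, inv_mul_eq_div, div_le_div_iff_of_pos_right hq]
    have hint1 : IntegrableOn (fun y : EuclideanSpace ℝ (Fin (n-1)) =>
        Real.exp (-(p * τ * L * ‖y‖))) (Metric.ball 0 δ) volume :=
      cont_intOn_ball (Real.continuous_exp.comp ((continuous_const.mul continuous_norm).neg)) δ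
    have hint2 : IntegrableOn (fun y : EuclideanSpace ℝ (Fin (n-1)) =>
        Real.exp (-(p * τ * l y))) (Metric.ball 0 δ) volume :=
      cont_intOn_ball (Real.continuous_exp.comp (continuous_const.mul hlc).neg) δ
    have hconst : IntegrableOn (fun _ : EuclideanSpace ℝ (Fin (n-1)) =>
        Real.exp (-(p * τ * δ))) (Metric.ball 0 δ) volume :=
      integrableOn_const measure_ball_lt_top.ne
    rw [integral_sub hint2 hconst, setIntegral_const, smul_eq_mul]
    apply sub_le_sub_right
    apply setIntegral_mono_on hint1 hint2 measurableSet_ball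
    intro y _
    apply Real.exp_le_exp.2
    apply neg_le_neg
    calc p * τ * l y ≤ p * τ * (L * ‖y‖) :=
          mul_le_mul_of_nonneg_left (hly y) hq.le
      _ = p * τ * L * ‖y‖ := by ring
  refine ⟨part1, ?_⟩
  -- Part 2
  haveI : Nontrivial (EuclideanSpace ℝ (Fin (n-1))) := by
    apply Module.nontrivial_of_finrank_pos (R := ℝ)
    rw [finrank_euclideanSpace_fin]
    omega
  set V1 : ℝ := (volume (Metric.ball (0 : EuclideanSpace ℝ (Fin (n - 1))) 1)).toReal with hV1def
  set Vδ : ℝ := (volume (Metric.ball (0 : EuclideanSpace ℝ (Fin (n - 1))) δ)).toReal with hVδdef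
  have hV1 : 0 < V1 :=
    ENNReal.toReal_pos (Metric.measure_ball_pos volume (0 : EuclideanSpace ℝ (Fin (n - 1))) one_pos).ne' measure_ball_lt_top.ne
  have hballvol : ∀ r : ℝ, 0 ≤ r →
      (volume (Metric.ball (0 : EuclideanSpace ℝ (Fin (n - 1))) r)).toReal = r ^ (n-1) * V1 := by
    intro r hr
    rw [Measure.addHaar_ball volume 0 hr, ENNReal.toReal_mul,
      ENNReal.toReal_ofReal (by positivity), finrank_euclideanSpace_fin]
  set K : ℝ := Real.exp (-(p * L)) * V1 with hKdef
  have hK : 0 < K := mul_pos (Real.exp_pos _) hV1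
  -- tendsto
  have t3 : Filter.Tendsto (fun τ : ℝ => Vδ * τ ^ (n-1) * Real.exp (-(p * δ * τ)))
      Filter.atTop (nhds 0) := by
    have t1 := tendsto_pow_mul_exp_neg_atTop_nhds_zero (n-1)
    have t2 : Filter.Tendsto (fun τ : ℝ => p * δ * τ) Filter.atTop Filter.atTop :=
      Filter.Tendsto.const_mul_atTop (mul_pos hp0 hδ) Filter.tendsto_id
    have t4 := (tendsto_const_nhds (x := Vδ * ((p*δ)⁻¹)^(n-1))).mul (t1.comp t2)
    rw [mul_zero] at t4
    convert t4 using 2 with τ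
    simp only [Function.comp]
    rw [mul_pow]
    have : ((p*δ)⁻¹)^(n-1) * (p*δ)^(n-1) = 1 := by
      rw [← mul_pow, inv_mul_cancel₀ (by positivity), one_pow]
    linear_combination (-(Vδ * τ ^ (n-1) * Real.exp (-(p * δ * τ)))) * this
  have hev := Filter.eventually_atTop.1 (t3.eventually_le_const (by positivity : (0:ℝ) < K/2))
  obtain ⟨a, ha⟩ := hev
  refine ⟨K / (2*p), by positivity, max a (max 1 δ⁻¹), le_trans (le_max_left 1 δ⁻¹) (le_max_right _ _), ?_⟩
  intro τ hτ
  have hτ1 : (1:ℝ) ≤ τ := le_trans (le_trans (le_max_left 1 δ⁻¹) (le_max_right a _)) hτ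
  have hτ0 : (0:ℝ) < τ := lt_of_lt_of_le one_pos hτ1
  have hτδ : τ⁻¹ ≤ δ := by
    have h1 : δ⁻¹ ≤ τ := le_trans (le_trans (le_max_right 1 δ⁻¹) (le_max_right a _)) hτ
    calc τ⁻¹ ≤ (δ⁻¹)⁻¹ := by
          apply inv_anti₀ (by positivity) h1
      _ = δ := inv_inv δ
  have hq : 0 < p * τ := mul_pos hp0 hτ0
  -- lower bound on integral
  have hint1 : IntegrableOn (fun y : EuclideanSpace ℝ (Fin (n-1)) =>
      Real.exp (-(p * τ * L * ‖y‖))) (Metric.ball 0 δ) volume :=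
    cont_intOn_ball (Real.continuous_exp.comp ((continuous_const.mul continuous_norm).neg)) δ
  have stepA : ∫ y in Metric.ball (0 : EuclideanSpace ℝ (Fin (n-1))) τ⁻¹,
      Real.exp (-(p * τ * L * ‖y‖)) ≤
      ∫ y in Metric.ball (0 : EuclideanSpace ℝ (Fin (n-1))) δ,
      Real.exp (-(p * τ * L * ‖y‖)) := by
    apply setIntegral_mono_set hint1
    · exact Filter.Eventually.of_forall fun y => (Real.exp_pos _).le
    · exact (Metric.ball_subset_ball hτδ).eventuallyLE
  have stepB : Real.exp (-(p * L)) * (τ⁻¹ ^ (n-1) * V1) ≤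
      ∫ y in Metric.ball (0 : EuclideanSpace ℝ (Fin (n-1))) τ⁻¹,
      Real.exp (-(p * τ * L * ‖y‖)) := by
    have := setIntegral_mono_on
      (integrableOn_const measure_ball_lt_top.ne :
        IntegrableOn (fun _ : EuclideanSpace ℝ (Fin (n-1)) => Real.exp (-(p * L)))
          (Metric.ball 0 τ⁻¹) volume)
      (hint1.mono_set (Metric.ball_subset_ball hτδ))
      measurableSet_ball (fun y hy => by
        apply Real.exp_le_exp.2
        apply neg_le_neg
        have hyn : ‖y‖ ≤ τ⁻¹ := by
          have := mem_ball_zero_iff.1 hy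
          exact this.le
        calc p * τ * L * ‖y‖ ≤ p * τ * L * τ⁻¹ :=
              mul_le_mul_of_nonneg_left hyn (by positivity)
          _ = p * L := by field_simp)
    rwa [setIntegral_const, smul_eq_mul, measureReal_def, hballvol τ⁻¹ (by positivity), mul_comm] at this
  have stepC : Vδ * Real.exp (-(p * δ * τ)) ≤ K/2 * τ⁻¹ ^ (n-1) := by
    have h1 := ha τ (le_trans (le_max_left a _) hτ)
    have h2 : (0:ℝ) < τ ^ (n-1) := by positivity
    calc Vδ * Real.exp (-(p * δ * τ))
        = Vδ * τ ^ (n-1) * Real.exp (-(p * δ * τ)) / τ ^ (n-1) := by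
          rw [eq_div_iff h2.ne']; ring
      _ ≤ (K/2) / τ ^ (n-1) := by gcongr
      _ = K/2 * τ⁻¹ ^ (n-1) := by rw [div_eq_mul_inv, inv_pow]
  have hrpow : τ ^ (-(n:ℝ)) = τ⁻¹ ^ n := by
    rw [Real.rpow_neg hτ0.le, Real.rpow_natCast, inv_pow]
  have hKeq : Real.exp (-(p*L)) * (τ⁻¹ ^ (n-1) * V1) = K * τ⁻¹ ^ (n-1) := by
    rw [hKdef]; ring
  have hhalf : K/2 * τ⁻¹ ^ (n-1) + K/2 * τ⁻¹ ^ (n-1) = K * τ⁻¹ ^ (n-1) := by ring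
  calc K/(2*p) * τ ^ (-(n:ℝ))
      = (p*τ)⁻¹ * (K/2 * τ⁻¹ ^ (n-1)) := by
        rw [hrpow]
        have hn1 : n - 1 + 1 = n := by omega
        rw [← hn1, pow_succ, mul_inv]
        field_simp
        rw [Nat.add_sub_cancel]
    _ ≤ (p*τ)⁻¹ * ((∫ y in Metric.ball (0 : EuclideanSpace ℝ (Fin (n - 1))) δ,
            Real.exp (-(p * τ * L * ‖y‖))) - Vδ * Real.exp (-(p * δ * τ))) := by
        apply mul_le_mul_of_nonneg_left _ (inv_nonneg.2 hq.le)
        linarith [stepA, stepB, stepC, hKeq, hhalf]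
    _ ≤ _ := part1 τ hτ1
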